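/- Let K and F be algebraic extensions of a field L with at least one of K, F separable over L and one normal over L. Then K and F are linearly disjoint over L if and only if K ∩ F = L. -/

import Mathlib

/-- `K` and `F` are linearly disjoint over `L` (inside a common extension `Ω`): every
finite subset of `K` that is `L`-linearly independent is also `F`-linearly independent. -/
def LinDisjoint (L : Type*) {Ω : Type*} [Field L] [Field Ω] [Algebra L Ω]
    (K F : IntermediateField L Ω) : Prop :=
  ∀ s : Finset Ω, (↑s : Set Ω) ⊆ (K : Set Ω) →
    LinearIndependent L (fun x : s => (x : Ω)) →
    LinearIndependent F (fun x : s => (x : Ω))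

open Polynomial IntermediateField

set_option maxHeartbeats 1000000
set_option synthInstance.maxHeartbeats 400000

section Aux

variable {E Ω : Type*} [Field E] [Field Ω] [Algebra E Ω]

/-- An element of an algebraically closed algebraic extension fixed by all automorphisms
has some `q ^ n`-th power in the base field. -/
theorem fixed_pow_mem [IsAlgClosed Ω] [Algebra.IsAlgebraic E Ω] (q : ℕ) [ExpChar E q]
    {b : Ω} (hb : ∀ σ : Ω ≃ₐ[E] Ω, σ b = b) :
    ∃ n : ℕ, b ^ q ^ n ∈ (algebraMap E Ω).range := by
  haveI : IsAlgClosure E Ω := ⟨‹_›, ‹_›⟩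
  have hint : IsIntegral E b := Algebra.IsIntegral.isIntegral b
  obtain ⟨g, hg_sep, n, hg⟩ := (minpoly.irreducible hint).hasSeparableContraction q
  refine ⟨n, ?_⟩
  set c := b ^ q ^ n with hc
  have hgc : aeval c g = 0 := by
    have h0 := minpoly.aeval E b
    rw [← hg, expand_aeval] at h0
    exact h0
  have hsepc : IsSeparable E c := hg_sep.of_dvd (minpoly.dvd E c hgc)
  by_contra hmem
  obtain ⟨y, hne, hconj⟩ := (notMem_iff_exists_ne_and_isConjRoot hsepc
    (IsAlgClosed.splits _)).1 (by simpa [Algebra.mem_bot] using hmem)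
  obtain ⟨σ, hσ⟩ := hconj.symm.exists_algEquiv
  have hfixc : σ c = c := by rw [hc, map_pow, hb σ]
  exact hne (by rw [← hσ, hfixc])

/-- A separable element whose `q ^ n`-th power lies in the base field lies in the
base field. -/
theorem sep_pow_mem (q : ℕ) [ExpChar E q] {x : Ω} (hsep : IsSeparable E x)
    {n : ℕ} (h : x ^ q ^ n ∈ (algebraMap E Ω).range) : x ∈ (algebraMap E Ω).range := by
  have h1 : (minpoly E x).natSepDegree = 1 :=
    (minpoly.natSepDegree_eq_one_iff_pow_mem q).2 ⟨n, h⟩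
  rw [hsep.natSepDegree_eq_natDegree] at h1
  exact minpoly.natDegree_eq_one_iff.1 h1

end Aux

section Coe

variable {L Ω : Type*} [Field L] [Field Ω] [Algebra L Ω]

theorem isSeparable_coe {F' : IntermediateField L Ω} {y : F'}
    (h : IsSeparable L y) : IsSeparable L (y : Ω) := by
  rw [IsSeparable, show ((y : Ω)) = algebraMap F' Ω y from rfl,
    minpoly.algebraMap_eq (algebraMap F' Ω).injective]
  exact h

/-- Mathlib's linear disjointness implies our finset version. -/
theorem linDisjoint_of_linearDisjoint {K F : IntermediateField L Ω}
    (H : K.LinearDisjoint F) : LinDisjoint L K F := by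
  intro s hs hindep
  have ha : LinearIndependent L (fun x : s => (⟨x, hs x.2⟩ : K)) :=
    hindep.of_comp K.val.toLinearMap
  exact H.linearIndependent_left ha

/-- Our finset version of linear disjointness implies mathlib's. -/
theorem linearDisjoint_of_linDisjoint {K F : IntermediateField L Ω}
    (H : LinDisjoint L K F) : K.LinearDisjoint F := by
  classical
  let b := Module.Basis.ofVectorSpace L K
  refine IntermediateField.LinearDisjoint.of_basis_left b ?_
  rw [linearIndependent_iff_finset_linearIndependent]
  intro t
  set g : _ → Ω := fun i => (b i : Ω) with hgdef
  have hg : LinearIndependent L g := b.linearIndependent.map' K.val.toLinearMap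
    (LinearMap.ker_eq_bot_of_injective K.val.injective)
  have hginj : Function.Injective g := hg.injective
  have hbij : Function.Bijective
      (fun i : t => (⟨g i, Finset.mem_image_of_mem g i.2⟩ : {x // x ∈ t.image g})) := by
    constructor
    · intro a₁ a₂ hab
      exact Subtype.ext (hginj (by simpa using congrArg Subtype.val hab))
    · rintro ⟨y, hy⟩
      obtain ⟨i, hi, rfl⟩ := Finset.mem_image.1 hy
      exact ⟨⟨i, hi⟩, rfl⟩
  let e : t ≃ {x // x ∈ t.image g} := Equiv.ofBijective _ hbij
  have hLt : LinearIndependent L (fun i : t => g i) :=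
    hg.comp Subtype.val Subtype.val_injective
  have himg : LinearIndependent L (fun x : (t.image g) => (x : Ω)) :=
    (linearIndependent_equiv' (R := L) e
      (f := fun x : (t.image g) => (x : Ω)) (g := fun i : t => g i)
      (by funext i; rfl)).1 hLt
  have hsub : (↑(t.image g) : Set Ω) ⊆ (K : Set Ω) := by
    intro x hx
    obtain ⟨i, _, rfl⟩ := Finset.mem_image.1 hx
    exact (b i).2
  have h2 := H (t.image g) hsub himg
  exact (linearIndependent_equiv' (R := F) e
    (f := fun x : (t.image g) => (x : Ω)) (g := fun i : t => g i)
    (by funext i; rfl)).2 h2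

end Coe

section Main

variable (L : Type*) [Field L]

/-- The key direction: if `F` is normal over `L`, one of `K`, `F` is separable over `L`,
and `K ⊓ F = ⊥`, then `K` and `F` are linearly disjoint. -/
theorem linDisjoint_of_inf_eq_bot (K F : IntermediateField L (AlgebraicClosure L))
    [Normal L F] (hsep : Algebra.IsSeparable L K ∨ Algebra.IsSeparable L F)
    (h : K ⊓ F = ⊥) : LinDisjoint L K F := by
  classical
  obtain ⟨q, hq⟩ := ExpChar.exists L
  haveI := hq
  set Ω := AlgebraicClosure L with hΩ
  intro s hsK hindep
  by_contra hdep
  rw [linearIndependent_iff] at hdep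
  push_neg at hdep
  obtain ⟨l₀, hl₀, hl₀ne⟩ := hdep
  set v : s → Ω := fun x => (x : Ω) with hv
  have hex : ∃ n, ∃ l : {x // x ∈ s} →₀ F,
      Finsupp.linearCombination F v l = 0 ∧ l ≠ 0 ∧ l.support.card = n :=
    ⟨_, l₀, hl₀, hl₀ne, rfl⟩
  obtain ⟨l, hl, hlne, hlcard⟩ := Nat.find_spec hex
  obtain ⟨x0, hx0⟩ := Finsupp.support_nonempty_iff.2 hlne
  have hlx0 : l x0 ≠ 0 := Finsupp.mem_support_iff.1 hx0
  -- elements of `s` are fixed by `K`-automorphisms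
  have hfixs : ∀ (σ : Ω ≃ₐ[K] Ω) (x : s), σ (v x) = v x := by
    intro σ x
    have : v x = algebraMap K Ω ⟨v x, hsK x.2⟩ := rfl
    rw [this, AlgEquiv.commutes]
  -- the normalized coefficients are fixed by all `K`-automorphisms
  have hfix : ∀ (σ : Ω ≃ₐ[K] Ω) (x : s),
      σ ((l x * (l x0)⁻¹ : F) : Ω) = ((l x * (l x0)⁻¹ : F) : Ω) := by
    intro σ x
    set τ : F ≃ₐ[L] F := (σ.restrictScalars L).restrictNormal F with hτdef
    have hτ : ∀ c : F, ((τ c : F) : Ω) = σ (c : Ω) := by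
      intro c
      exact AlgEquiv.restrictNormal_commutes (σ.restrictScalars L) F c
    set l1 : {x // x ∈ s} →₀ F :=
      l x0 • l.mapRange τ (map_zero τ) - τ (l x0) • l with hl1def
    have hcomb_map : Finsupp.linearCombination F v (l.mapRange τ (map_zero τ))
        = σ (Finsupp.linearCombination F v l) := by
      rw [Finsupp.linearCombination_apply, Finsupp.linearCombination_apply]
      rw [Finsupp.sum_mapRange_index (fun x => by rw [zero_smul])]
      rw [map_finsuppSum]
      refine Finsupp.sum_congr fun y _ => ?_
      rw [Algebra.smul_def, Algebra.smul_def, map_mul, hfixs σ y]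
      congr 1
      exact hτ (l y)
    have h1 : Finsupp.linearCombination F v l1 = 0 := by
      rw [hl1def, map_sub, map_smul, map_smul, hcomb_map, hl, map_zero, smul_zero,
        smul_zero, sub_zero]
    have happ : ∀ y : s, l1 y = l x0 * τ (l y) - τ (l x0) * l y := by
      intro y
      simp [hl1def, smul_eq_mul]
    have hsub : l1.support ⊆ l.support.erase x0 := by
      intro y hy
      have hyne : l1 y ≠ 0 := Finsupp.mem_support_iff.1 hy
      rw [happ y] at hyne
      rw [Finset.mem_erase]
      constructor
      · rintro rfl
        exact hyne (by rw [mul_comm, sub_self])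
      · rw [Finsupp.mem_support_iff]
        rintro h0
        exact hyne (by rw [h0, map_zero, mul_zero, mul_zero, sub_self])
    have hzero : l1 = 0 := by
      by_contra hne
      have hcard : l1.support.card < Nat.find hex := by
        calc l1.support.card ≤ (l.support.erase x0).card := Finset.card_le_card hsub
          _ < l.support.card := Finset.card_erase_lt_of_mem hx0
          _ = Nat.find hex := hlcard
      exact Nat.find_min hex hcard ⟨l1, h1, hne, rfl⟩
    have heq : l x0 * τ (l x) = τ (l x0) * l x := by
      have := congrArg (fun m => m x) hzero
      simp only [Finsupp.coe_zero, Pi.zero_apply] at this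
      rw [happ x] at this
      exact sub_eq_zero.1 this
    have hτx0 : τ (l x0) ≠ 0 := by
      simpa using hlx0
    have hτfix : τ (l x * (l x0)⁻¹) = l x * (l x0)⁻¹ := by
      rw [map_mul, map_inv₀]
      field_simp
      rw [mul_comm (τ (l x)) (l x0), heq, mul_comm]
    calc σ ((l x * (l x0)⁻¹ : F) : Ω) = ((τ (l x * (l x0)⁻¹) : F) : Ω) := (hτ _).symm
      _ = _ := by rw [hτfix]
  -- hence some `q ^ n`-th power of each coefficient lies in `L`
  haveI : Algebra.IsAlgebraic K Ω := Algebra.IsAlgebraic.tower_top (K := L) K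
  haveI : ExpChar K q := expChar_of_injective_algebraMap (algebraMap L K).injective q
  have hpow : ∀ x : s, ∃ n, ((l x * (l x0)⁻¹ : F) : Ω) ^ q ^ n ∈ (algebraMap L Ω).range := by
    intro x
    obtain ⟨n, hn⟩ := fixed_pow_mem (E := K) q (fun σ => hfix σ x)
    refine ⟨n, ?_⟩
    obtain ⟨k, hk⟩ := hn
    have hKmem : ((l x * (l x0)⁻¹ : F) : Ω) ^ q ^ n ∈ K := by
      rw [← hk]; exact k.2
    have hFmem : ((l x * (l x0)⁻¹ : F) : Ω) ^ q ^ n ∈ F := by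
      have : ((l x * (l x0)⁻¹ : F) : Ω) ∈ F := (l x * (l x0)⁻¹ : F).2
      exact pow_mem this _
    have hbot : ((l x * (l x0)⁻¹ : F) : Ω) ^ q ^ n ∈ K ⊓ F := ⟨hKmem, hFmem⟩
    rw [h, IntermediateField.mem_bot] at hbot
    exact hbot
  -- the relation with normalized coefficients
  have hrel : ∑ x ∈ l.support, ((l x * (l x0)⁻¹ : F) : Ω) * v x = 0 := by
    have hcomb : ∑ x ∈ l.support, ((l x : Ω)) * v x = 0 := by
      rw [Finsupp.linearCombination_apply, Finsupp.sum] at hl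
      rw [← hl]
      refine Finset.sum_congr rfl fun x _ => ?_
      rw [Algebra.smul_def]; rfl
    have : ∑ x ∈ l.support, ((l x * (l x0)⁻¹ : F) : Ω) * v x
        = (∑ x ∈ l.support, ((l x : Ω)) * v x) * ((l x0 : Ω))⁻¹ := by
      rw [Finset.sum_mul]
      refine Finset.sum_congr rfl fun x _ => ?_
      simp only [MulMemClass.coe_mul, IntermediateField.coe_inv]
      ring
    rw [this, hcomb, zero_mul]
  have hx0coe : ((l x0 * (l x0)⁻¹ : F) : Ω) = 1 := by
    rw [mul_inv_cancel₀ hlx0]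
    simp
  -- now split on which of `K`, `F` is separable
  rcases hsep with hsepK | hsepF
  · -- `K` separable: raise the relation to a `q ^ N`-th power
    haveI : ExpChar Ω q := expChar_of_injective_algebraMap (algebraMap L Ω).injective q
    choose n hn using hpow
    set N := Finset.univ.sup n with hN
    have hpowN : ∀ x : s, ∃ d : L,
        algebraMap L Ω d = ((l x * (l x0)⁻¹ : F) : Ω) ^ q ^ N := by
      intro x
      obtain ⟨c, hc⟩ := hn x
      refine ⟨c ^ q ^ (N - n x), ?_⟩
      rw [map_pow, hc, ← pow_mul, ← pow_add,
        Nat.add_sub_of_le (Finset.le_sup (Finset.mem_univ x))]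
    choose d hd using hpowN
    have hsepx : ∀ x : s, IsSeparable L (v x) := by
      intro x
      have := Algebra.IsSeparable.isSeparable L (⟨v x, hsK x.2⟩ : K)
      exact isSeparable_coe (F' := K) (y := ⟨v x, hsK x.2⟩) this
    have hind2 : LinearIndependent L (fun x : s => v x ^ q ^ N) :=
      hindep.map_pow_expChar_pow_of_isSeparable' q N hsepx
    have hrelN : ∑ x ∈ l.support, d x • v x ^ q ^ N = 0 := by
      have := congrArg (fun z => z ^ q ^ N) hrel
      simp only [zero_pow (expChar_pow_pos L q N).ne'] at this
      rw [sum_pow_char_pow] at this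
      rw [← this]
      refine Finset.sum_congr rfl fun x _ => ?_
      rw [Algebra.smul_def, hd x, mul_pow]
    have := linearIndependent_iff'.1 hind2 l.support d hrelN x0 hx0
    rw [← map_eq_zero_iff (algebraMap L (AlgebraicClosure L)) (algebraMap L _).injective,
      hd x0, hx0coe, one_pow] at this
    exact one_ne_zero this
  · -- `F` separable: each coefficient is already in `L`
    have hax : ∀ x : s, ∃ c : L, algebraMap L Ω c = ((l x * (l x0)⁻¹ : F) : Ω) := by
      intro x
      obtain ⟨m, hm⟩ := hpow x
      have hsepa : IsSeparable L ((l x * (l x0)⁻¹ : F) : Ω) :=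
        isSeparable_coe (Algebra.IsSeparable.isSeparable L (l x * (l x0)⁻¹ : F))
      exact sep_pow_mem q hsepa hm
    choose c hc using hax
    have hrelL : ∑ x ∈ l.support, c x • v x = 0 := by
      rw [← hrel]
      refine Finset.sum_congr rfl fun x _ => ?_
      rw [Algebra.smul_def, hc x]
    have := linearIndependent_iff'.1 hindep l.support c hrelL x0 hx0
    rw [← map_eq_zero_iff (algebraMap L (AlgebraicClosure L)) (algebraMap L _).injective,
      hc x0, hx0coe] at this
    exact one_ne_zero this

end Main

/-- Let `K` and `F` be algebraic extensions of `L` (inside an algebraic closure of `L`),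
at least one of them separable over `L` and one of them normal over `L`. Then `K` and `F`
are linearly disjoint over `L` if and only if `K ∩ F = L`. -/
theorem linDisjoint_iff_inf_eq_bot (L : Type*) [Field L]
    (K F : IntermediateField L (AlgebraicClosure L))
    (hsep : Algebra.IsSeparable L K ∨ Algebra.IsSeparable L F)
    (hnormal : Normal L K ∨ Normal L F) :
    LinDisjoint L K F ↔ K ⊓ F = ⊥ := by
  constructor
  · intro H
    exact (linearDisjoint_of_linDisjoint H).inf_eq_bot
  · intro h
    rcases hnormal with hK | hF
    · haveI := hK
      have h' : F ⊓ K = ⊥ := by rwa [inf_comm]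
      have H1 : LinDisjoint L F K := linDisjoint_of_inf_eq_bot L F K hsep.symm h'
      exact linDisjoint_of_linearDisjoint (linearDisjoint_of_linDisjoint H1).symm
    · haveI := hF
      exact linDisjoint_of_inf_eq_bot L K F hsep h
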